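/- Let v be a non-empty antipalindromic prefix (v = w_n, n ≥ 1) of a pseudostandard sequence starting with 0, i.e., w_0 = ε and w_{k+1} = (w_k δ_{k+1})^E for letters δ_k with δ_1 = 0. For a ∈ {0,1}, let e_a be the maximal length of an antipalindromic prefix q of v with qa a prefix of v (setting e_a = e_{\overline a} if no such q exists). Then Γ = {e_0, e_1, |v| - e_1 - 1} is a string attractor of v. -/

import Mathlib

def occursAt (f w : List Bool) (i : ℕ) : Prop :=
  i + f.length ≤ w.length ∧ (w.drop i).take f.length = f

def IsAttractor (w : List Bool) (Γ : Finset ℕ) : Prop :=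
  (∀ γ ∈ Γ, γ < w.length) ∧
  ∀ f : List Bool, f ≠ [] → f <:+: w →
    ∃ i, occursAt f w i ∧ ∃ γ ∈ Γ, i ≤ γ ∧ γ < i + f.length

def Emap (w : List Bool) : List Bool := (w.reverse).map (fun b => !b)

def IsPal (w : List Bool) : Prop := w.reverse = w

def IsAntipal (w : List Bool) : Prop := Emap w = w

def IsPalClosure (w p : List Bool) : Prop :=
  IsPal p ∧ w <+: p ∧ ∀ q, IsPal q → w <+: q → p.length ≤ q.length

def IsAntipalClosure (w p : List Bool) : Prop :=
  IsAntipal p ∧ w <+: p ∧ ∀ q, IsAntipal q → w <+: q → p.length ≤ q.length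

namespace SA

@[simp] lemma Emap_length (w : List Bool) : (Emap w).length = w.length := by simp [Emap]

lemma Emap_append (a b : List Bool) : Emap (a ++ b) = Emap b ++ Emap a := by
  simp [Emap]

@[simp] lemma Emap_Emap (w : List Bool) : Emap (Emap w) = w := by
  simp [Emap, List.map_reverse, List.map_map, Function.comp]
  exact List.map_id'' (by simp) w

@[simp] lemma Emap_nil : Emap [] = [] := rfl

lemma Emap_singleton (a : Bool) : Emap [a] = [!a] := rfl

lemma Emap_getElem (w : List Bool) (i : ℕ) (h : i < w.length) :
    (Emap w)[i]'(by simpa using h) = !(w[w.length - 1 - i]'(by omega)) := by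
  simp [Emap, List.getElem_reverse]

lemma antipal_nil : IsAntipal [] := rfl

lemma antipal_getElem {w : List Bool} (hw : IsAntipal w) {i j : ℕ} (hi : i < w.length)
    (hj : j < w.length) (hij : i + j + 1 = w.length) :
    w[i] = !(w[j]) := by
  have hjj : j = w.length - 1 - i := by omega
  subst hjj
  rw [← Emap_getElem w i hi]
  exact List.getElem_of_eq hw.symm hi

lemma antipal_even {w : List Bool} (hw : IsAntipal w) : w.length % 2 = 0 := by
  by_contra hodd
  set k := w.length / 2 with hk
  have hlt : k < w.length := by omega
  have := antipal_getElem hw hlt hlt (by omega)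
  simp at this

lemma not_antipal_singleton (a : Bool) : ¬ IsAntipal [a] := by
  intro h
  have := antipal_even h
  simp at this

lemma antipal_prefix_suffix {w u : List Bool} (hw : IsAntipal w) (h : u <+: w) :
    Emap u <:+ w := by
  obtain ⟨t, ht⟩ := h
  refine ⟨Emap t, ?_⟩
  rw [← Emap_append, ht, hw]

lemma antipal_suffix_prefix {w u : List Bool} (hw : IsAntipal w) (h : u <:+ w) :
    Emap u <+: w := by
  obtain ⟨t, ht⟩ := h
  refine ⟨Emap t, ?_⟩
  rw [← Emap_append, ht, hw]

lemma antipal_sandwich {y : List Bool} (d : Bool) (hy : IsAntipal y) :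
    IsAntipal ([!d] ++ y ++ [d]) := by
  unfold IsAntipal
  rw [Emap_append, Emap_append, Emap_singleton, Emap_singleton, hy]
  simp

lemma antipal_sandwich_dest {y : List Bool} {a b : Bool}
    (h : IsAntipal ([a] ++ y ++ [b])) : a = !b ∧ IsAntipal y := by
  unfold IsAntipal at h
  rw [Emap_append, Emap_append, Emap_singleton, Emap_singleton] at h
  have h1 : ([!b] : List Bool) = [a] ∧ Emap y ++ [!a] = y ++ [b] :=
    List.append_inj h (by simp)
  obtain ⟨h1, h2⟩ := h1
  have h3 : Emap y = y ∧ ([!a] : List Bool) = [b] := List.append_inj h2 (by simp)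
  have h1' : (!b) = a := List.singleton_injective h1
  exact ⟨h1'.symm, h3.1⟩

namespace Occ

lemma gec {w : List Bool} {i j : ℕ} (h : i = j) (hi : i < w.length) :
    w[i]'hi = w[j]'(h ▸ hi) := by subst h; rfl

lemma occ_get {f w : List Bool} {i : ℕ} (h : occursAt f w i) (j : ℕ) (hj : j < f.length) :
    w[i + j]'(by have := h.1; omega) = f[j]'hj := by
  obtain ⟨hlen, heq⟩ := h
  have h2 : j < (List.take f.length (List.drop i w)).length := by simp; omega
  have h3 := List.getElem_of_eq heq h2
  have e1 : (List.take f.length (List.drop i w))[j]'h2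
      = (List.drop i w)[j]'(by simp; omega) := List.getElem_take ..
  have e2 : (List.drop i w)[j]'(by simp; omega) = w[i + j]'(by omega) := List.getElem_drop ..
  exact e2.symm.trans (e1.symm.trans h3)

lemma occ_of {f w : List Bool} {i : ℕ} (hlen : i + f.length ≤ w.length)
    (hget : ∀ j (hj : j < f.length), w[i + j]'(by omega) = f[j]'hj) :
    occursAt f w i := by
  refine ⟨hlen, ?_⟩
  apply List.ext_getElem
  · simp; omega
  · intro j h1 h2
    rw [List.getElem_take, List.getElem_drop]
    exact hget j h2

lemma infix_occ {f w : List Bool} (h : f <:+: w) : ∃ i, occursAt f w i := by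
  obtain ⟨s, t, hst⟩ := h
  refine ⟨s.length, ?_, ?_⟩
  · rw [← hst]; simp
  · rw [← hst, List.append_assoc, List.drop_left, List.take_left]

lemma occ_infix {f w : List Bool} {i : ℕ} (h : occursAt f w i) : f <:+: w := by
  obtain ⟨hlen, heq⟩ := h
  rw [← heq]
  exact ((w.drop i).take_prefix f.length).isInfix.trans (w.drop_suffix i).isInfix

lemma occ_prefix_ext {f v W : List Bool} {i : ℕ} (h : occursAt f v i) (hp : v <+: W) :
    occursAt f W i := by
  have hl := hp.length_le
  have h1 := h.1
  refine occ_of (by omega) (fun j hj => ?_)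
  rw [← occ_get h j hj]
  exact (hp.getElem (by omega)).symm

lemma occ_shift {f v u : List Bool} {i : ℕ} (h : occursAt f v i) :
    occursAt f (u ++ v) (u.length + i) := by
  have h1 := h.1
  refine occ_of (by simp; omega) (fun j hj => ?_)
  rw [gec (show u.length + i + j = u.length + (i + j) by omega),
    List.getElem_append_right (by omega)]
  have := occ_get h j hj
  simpa using this

lemma occ_restrict_take {f W : List Bool} {i m : ℕ} (h : occursAt f W i)
    (hm : i + f.length ≤ m) (hmW : m ≤ W.length) : occursAt f (W.take m) i := by
  have h1 := h.1
  refine occ_of (by simp; omega) (fun j hj => ?_)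
  rw [← occ_get h j hj]
  exact List.getElem_take ..

lemma occ_restrict_drop {f W : List Bool} {i t : ℕ} (h : occursAt f W i)
    (ht : t ≤ i) : occursAt f (W.drop t) (i - t) := by
  have h1 := h.1
  refine occ_of (by simp; omega) (fun j hj => ?_)
  rw [List.getElem_drop, ← occ_get h j hj]
  congr 1
  omega

end Occ

section Closure

lemma prefix_eq_of_len {u v W : List Bool} (hu : u <+: W) (hv : v <+: W)
    (h : u.length = v.length) : u = v :=
  (List.prefix_of_prefix_length_le hu hv h.le).eq_of_length h

lemma prefix_snoc_getElem {q W : List Bool} {a : Bool} (h : q ++ [a] <+: W) :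
    W[q.length]'(by have := h.length_le; simp at this; omega) = a := by
  have hb : q.length < (q ++ [a]).length := by simp
  have := h.getElem hb
  rw [← this, List.getElem_append_right (le_refl _)]
  simp

lemma suffix_snoc {u v : List Bool} (d : Bool) (h : u <:+ v) : u ++ [d] <:+ v ++ [d] := by
  obtain ⟨t, ht⟩ := h
  exact ⟨t, by rw [← List.append_assoc, ht]⟩

lemma overlap_antipal {x p : List Bool} (hp : IsAntipal p) (hpre : x <+: p)
    (hk : p.length ≤ 2 * x.length) : IsAntipal (x.drop (p.length - x.length)) := by
  obtain ⟨r, hr⟩ := hpre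
  have hxl := List.IsPrefix.length_le ⟨r, hr⟩
  have ha : r.length = p.length - x.length := by
    have : p.length = x.length + r.length := by rw [← hr]; simp
    omega
  set a := p.length - x.length with hadef
  have haa : a ≤ x.length := by omega
  -- Emap x = p.drop a
  have e1 : Emap x = p.drop a := by
    conv_rhs => rw [← hp]
    rw [← hr, Emap_append, ← ha, ← Emap_length r]
    rw [List.drop_left]
  have e2 : p.drop a = x.drop a ++ r := by
    rw [← hr, List.drop_append]
    have : a - x.length = 0 := by omega
    rw [this, List.drop_zero]
  have e3 : Emap x = Emap (x.drop a) ++ Emap (x.take a) := by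
    conv_lhs => rw [← List.take_append_drop a x]
    rw [Emap_append]
  have e4 : Emap (x.drop a) ++ Emap (x.take a) = x.drop a ++ r := by
    rw [← e3, e1, e2]
  have := List.append_inj e4 (by simp)
  exact this.1

lemma antipal_suffix_to_witness {v u : List Bool} {d : Bool} (hv : IsAntipal v)
    (hu : IsAntipal u) (hne : u ≠ []) (hsuf : u <:+ v ++ [d]) :
    ∃ y, IsAntipal y ∧ y ++ [d] <+: v ∧ y.length + 2 = u.length := by
  have hul : 1 ≤ u.length := List.length_pos_iff.mpr hne
  have huev := antipal_even hu
  have hul2 : 2 ≤ u.length := by omega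
  have hulen : u.length ≤ v.length + 1 := by
    have := hsuf.length_le; simpa using this
  -- u = v.drop k ++ [d]
  have hdrop : u = (v ++ [d]).drop ((v ++ [d]).length - u.length) :=
    List.suffix_iff_eq_drop.mp hsuf
  set k := (v ++ [d]).length - u.length with hkdef
  have hkeq : k = v.length + 1 - u.length := by simp [hkdef]
  have hkv : k ≤ v.length := by omega
  have hu2 : u = v.drop k ++ [d] := by
    rw [hdrop, List.drop_append]
    have : k - v.length = 0 := by omega
    rw [this, List.drop_zero]
  set u' := v.drop k with hu'def
  have hu'len : u'.length = u.length - 1 := by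
    simp [hu'def]
    omega
  have hu'ne : u' ≠ [] := by
    intro hc
    rw [hc] at hu'len
    simp at hu'len
    omega
  obtain ⟨c, y, hcy⟩ : ∃ c y, u' = c :: y := by
    cases hu'eq : u' with
    | nil => exact absurd hu'eq hu'ne
    | cons c y => exact ⟨c, y, rfl⟩
  have hu3 : u = [c] ++ y ++ [d] := by rw [hu2, hcy]; simp
  have hsd := antipal_sandwich_dest (hu3 ▸ hu)
  obtain ⟨hcd, hy⟩ := hsd
  -- [!d] ++ y = u' <:+ v
  have hu'suf : u' <:+ v := List.drop_suffix k v
  have hpre : Emap u' <+: v := antipal_suffix_prefix hv hu'suf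
  have hEu' : Emap u' = y ++ [d] := by
    rw [hcy, hcd]
    show Emap ([!d] ++ y) = y ++ [d]
    rw [Emap_append, hy, Emap_singleton]
    simp
  refine ⟨y, hy, by rw [← hEu']; exact hpre, ?_⟩
  have : u'.length = y.length + 1 := by rw [hcy]; simp
  omega

lemma closure_upper {v p : List Bool} {d : Bool} (hc : IsAntipalClosure (v ++ [d]) p)
    {p' : List Bool} (hp' : IsAntipal p') (hsuf : p' <:+ v ++ [d]) :
    p.length + p'.length ≤ 2 * (v.length + 1) := by
  set x := v ++ [d] with hxdef
  have hp'len : p'.length ≤ x.length := hsuf.length_le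
  set s := x.take (x.length - p'.length) with hsdef
  have hslen : s.length = x.length - p'.length := by simp [hsdef]
  have hx : x = s ++ p' := by
    have h1 : p' = x.drop (x.length - p'.length) := List.suffix_iff_eq_drop.mp hsuf
    conv_lhs => rw [← List.take_append_drop (x.length - p'.length) x]
    rw [← h1]
  have hcand : IsAntipal (x ++ Emap s) := by
    unfold IsAntipal
    rw [Emap_append, Emap_Emap]
    conv_lhs => rw [hx, Emap_append, hp']
    rw [hx]
    simp [List.append_assoc]
  have hmin := hc.2.2 (x ++ Emap s) hcand ⟨Emap s, rfl⟩
  have : (x ++ Emap s).length = x.length + s.length := by simp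
  have hxlen : x.length = v.length + 1 := by simp [hxdef]
  omega

lemma closure_lower {v p : List Bool} {d : Bool} {g : ℕ} (hv : IsAntipal v)
    (hc : IsAntipalClosure (v ++ [d]) p)
    (hbound : ∀ y, IsAntipal y → y ++ [d] <+: v → y.length ≤ g) :
    2 * v.length ≤ p.length + g := by
  by_contra hcon
  push_neg at hcon
  set x := v ++ [d] with hxdef
  have hxlen : x.length = v.length + 1 := by simp [hxdef]
  have hpx : x.length ≤ p.length := hc.2.1.length_le
  have hk2 : p.length ≤ 2 * x.length := by omega
  have hanti := overlap_antipal hc.1 hc.2.1 hk2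
  set u := x.drop (p.length - x.length) with hudef
  have hulen : u.length = 2 * x.length - p.length := by simp [hudef]; omega
  have hune : u ≠ [] := by
    intro hcu
    rw [hcu] at hulen
    simp at hulen
    omega
  obtain ⟨y, hy, hypre, hylen⟩ := antipal_suffix_to_witness hv hanti hune (List.drop_suffix _ _)
  have := hbound y hy hypre
  omega

lemma closure_len {v p qq : List Bool} {d : Bool} {g : ℕ} (hv : IsAntipal v)
    (hc : IsAntipalClosure (v ++ [d]) p)
    (hq : IsAntipal qq) (hqpre : qq ++ [d] <+: v) (hqlen : qq.length = g)
    (hbound : ∀ y, IsAntipal y → y ++ [d] <+: v → y.length ≤ g) :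
    p.length + g = 2 * v.length := by
  have hlow := closure_lower hv hc hbound
  have hEq : Emap (qq ++ [d]) = [!d] ++ qq := by
    rw [Emap_append, Emap_singleton, hq]
  have hsuf : ([!d] ++ qq) ++ [d] <:+ v ++ [d] := by
    apply suffix_snoc
    rw [← hEq]
    exact antipal_prefix_suffix hv hqpre
  have hp' : IsAntipal ([!d] ++ qq ++ [d]) := antipal_sandwich d hq
  have hup := closure_upper hc hp' hsuf
  have : ([!d] ++ qq ++ [d]).length = g + 2 := by simp [hqlen]
  omega

lemma closure_len_degen {v p : List Bool} {d : Bool} (hv : IsAntipal v)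
    (hc : IsAntipalClosure (v ++ [d]) p)
    (hno : ¬ ∃ y, IsAntipal y ∧ y ++ [d] <+: v) :
    p.length = 2 * v.length + 2 := by
  have hup := closure_upper hc antipal_nil List.nil_suffix
  simp at hup
  have hlow : 2 * v.length + 2 ≤ p.length := by
    by_contra hcon
    push_neg at hcon
    set x := v ++ [d] with hxdef
    have hxlen : x.length = v.length + 1 := by simp [hxdef]
    have hpx : x.length ≤ p.length := hc.2.1.length_le
    have hk2 : p.length ≤ 2 * x.length := by omega
    have hanti := overlap_antipal hc.1 hc.2.1 hk2
    set u := x.drop (p.length - x.length) with hudef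
    have hulen : u.length = 2 * x.length - p.length := by simp [hudef]; omega
    have hune : u ≠ [] := by
      intro hcu
      rw [hcu] at hulen
      simp at hulen
      omega
    obtain ⟨y, hy, hypre, _⟩ := antipal_suffix_to_witness hv hanti hune (List.drop_suffix _ _)
    exact hno ⟨y, hy, hypre⟩
  omega

lemma closure_no_middle {x p r : List Bool} (hc : IsAntipalClosure x p)
    (hr : IsAntipal r) (hpre : r <+: p) (hlt : r.length < p.length) :
    r.length < x.length := by
  by_contra hcon
  push_neg at hcon
  have hxr : x <+: r := List.prefix_of_prefix_length_le hc.2.1 hpre hcon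
  have := hc.2.2 r hr hxr
  omega

end Closure

def altW : ℕ → List Bool
  | 0 => []
  | n+1 => altW n ++ [false, true]

@[simp] lemma altW_length (n : ℕ) : (altW n).length = 2 * n := by
  induction n with
  | zero => rfl
  | succ n ih => simp [altW, ih]; omega

lemma altW_get (n : ℕ) (i : ℕ) (h : i < (altW n).length) :
    (altW n)[i] = decide (i % 2 = 1) := by
  induction n with
  | zero => simp at h
  | succ n ih =>
    show (altW n ++ [false, true])[i]'(by simpa [altW] using h) = decide (i % 2 = 1)
    have hb : i < 2 * n + 2 := by simp at h; omega
    by_cases hi : i < (altW n).length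
    · rw [List.getElem_append_left hi]
      exact ih hi
    · rw [List.getElem_append_right (by omega)]
      simp only [altW_length] at hi
      push_neg at hi
      have hL : (altW n).length = 2*n := altW_length n
      rcases (by omega : i - (altW n).length = 0 ∨ i - (altW n).length = 1) with h0 | h0
      · rw [Occ.gec h0]
        have h2 : i % 2 = 0 := by omega
        simp [h2]
      · rw [Occ.gec h0]
        have h2 : i % 2 = 1 := by omega
        simp [h2]

lemma attA (k : ℕ) (hk : 1 ≤ k) : IsAttractor (altW k) {2*k - 2, 1} := by
  constructor
  · intro γ hγ
    simp at hγ
    rw [altW_length]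
    rcases hγ with h | h <;> omega
  · intro f hne hinf
    obtain ⟨i, hocc⟩ := Occ.infix_occ hinf
    have hlen := hocc.1
    rw [altW_length] at hlen
    have hflen : 1 ≤ f.length := List.length_pos_iff.mpr hne
    have hfget : ∀ j (hj : j < f.length), f[j] = decide ((i+j) % 2 = 1) := fun j hj => by
      rw [← Occ.occ_get hocc j hj, altW_get]
    by_cases hpar : i % 2 = 0
    · by_cases hl1 : f.length = 1
      · refine ⟨2*k - 2, ?_, 2*k-2, by simp, by omega⟩
        apply Occ.occ_of (by rw [altW_length]; omega)
        intro j hj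
        rw [altW_get, hfget j hj]
        simp only [decide_eq_decide]
        omega
      · refine ⟨0, ?_, 1, by simp, by omega⟩
        apply Occ.occ_of (by rw [altW_length]; omega)
        intro j hj
        rw [altW_get, hfget j hj]
        simp only [decide_eq_decide]
        omega
    · refine ⟨1, ?_, 1, by simp, by omega⟩
      apply Occ.occ_of (by rw [altW_length]; omega)
      intro j hj
      rw [altW_get, hfget j hj]
      simp only [decide_eq_decide]
      omega

section Trans

variable (n : ℕ)

@[simp] lemma transW_length :
    (altW n ++ [true, false] ++ altW n).length = 4*n + 2 := by
  simp; omega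

lemma transW_get (i : ℕ) (h : i < (altW n ++ [true, false] ++ altW n).length) :
    (altW n ++ [true, false] ++ altW n)[i] =
      if i = 2*n then true else if i = 2*n + 1 then false else decide (i % 2 = 1) := by
  have hb : i < 4*n + 2 := by simp at h; omega
  by_cases h1 : i < 2*n
  · rw [List.getElem_append_left (by simp; omega), List.getElem_append_left (by simpa using h1),
      altW_get n i (by simpa using h1), if_neg (by omega), if_neg (by omega)]
  · by_cases h2 : i < 2*n + 2
    · rw [List.getElem_append_left (h := by simp; omega),
        List.getElem_append_right (by simp; omega)]
      rcases (by have := altW_length n; omega : i - (altW n).length = 0 ∨ i - (altW n).length = 1) with h0 | h0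
      · rw [Occ.gec h0]
        have : i = 2*n := by have := altW_length n; omega
        simp [this]
      · rw [Occ.gec h0]
        have : i = 2*n+1 := by have := altW_length n; omega
        simp [this]
    · rw [List.getElem_append_right (by simp; omega)]
      have hL : (altW n ++ [true, false]).length = 2*n + 2 := by simp
      rw [altW_get n _ (by simp; omega)]
      rw [if_neg (by omega), if_neg (by omega)]
      simp only [decide_eq_decide, hL]
      omega

lemma attTrans (hn : 1 ≤ n) :
    IsAttractor (altW n ++ [true, false] ++ altW n) {2*n - 2, 2*n, 2*n + 1} := by
  constructor
  · intro γ hγ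
    simp only [Finset.mem_insert, Finset.mem_singleton] at hγ
    rw [transW_length]
    rcases hγ with h | h | h <;> omega
  · intro f hne hinf
    obtain ⟨i, hocc⟩ := Occ.infix_occ hinf
    have hlen := hocc.1
    rw [transW_length] at hlen
    have hflen : 1 ≤ f.length := List.length_pos_iff.mpr hne
    by_cases hA : i ≤ 2*n ∧ 2*n < i + f.length
    · exact ⟨i, hocc, 2*n, by simp, by omega⟩
    by_cases hB : i ≤ 2*n+1 ∧ 2*n+1 < i + f.length
    · exact ⟨i, hocc, 2*n+1, by simp, by omega⟩
    push_neg at hA hB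
    -- interval avoids both center positions
    have hclean : i + f.length ≤ 2*n ∨ 2*n + 2 ≤ i := by omega
    have hfget : ∀ j (hj : j < f.length), f[j] = decide ((i+j) % 2 = 1) := by
      intro j hj
      rw [← Occ.occ_get hocc j hj, transW_get n _ (by rw [transW_length]; omega), if_neg (by omega), if_neg (by omega)]
    have hl2n : f.length ≤ 2*n := by omega
    by_cases hC1 : f.length = 1 ∧ i % 2 = 0
    · refine ⟨2*n - 2, ?_, 2*n - 2, by simp, by omega⟩
      apply Occ.occ_of (by rw [transW_length]; omega)
      intro j hj
      rw [transW_get n _ (by rw [transW_length]; omega), if_neg (by omega), if_neg (by omega), hfget j hj]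
      simp only [decide_eq_decide]
      omega
    by_cases hC2 : f.length ≤ 2 ∧ i % 2 = 1
    · refine ⟨2*n, ?_, 2*n, by simp, by omega⟩
      apply Occ.occ_of (by rw [transW_length]; omega)
      intro j hj
      rw [transW_get n _ (by rw [transW_length]; omega)]
      rcases (by omega : j = 0 ∨ j = 1) with h0 | h0
      · subst h0
        rw [if_pos (by omega), hfget 0 (by omega), show (i+0) % 2 = 1 by omega]
        simp
      · subst h0
        rw [if_neg (by omega), if_pos (by omega), hfget 1 (by omega), show (i+1) % 2 = 0 by omega]
        simp
    by_cases hC3 : f.length % 2 = i % 2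
    · -- i' = 2*n - f.length, which has the parity of i
      refine ⟨2*n - f.length, ?_, 2*n - 2, by simp, by omega⟩
      apply Occ.occ_of (by rw [transW_length]; omega)
      intro j hj
      rw [transW_get n _ (by rw [transW_length]; omega), if_neg (by omega), if_neg (by omega), hfget j hj]
      simp only [decide_eq_decide]
      omega
    · -- i' = 2*n - f.length - 1
      have hlb : f.length ≤ 2*n - 1 := by omega
      refine ⟨2*n - f.length - 1, ?_, 2*n - 2, by simp, by omega⟩
      apply Occ.occ_of (by rw [transW_length]; omega)
      intro j hj
      rw [transW_get n _ (by rw [transW_length]; omega), if_neg (by omega), if_neg (by omega), hfget j hj]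
      simp only [decide_eq_decide]
      omega

end Trans

lemma attractor_transfer {v W : List Bool} {Γ Γ' : Finset ℕ}
    (hA : IsAttractor v Γ)
    (hpre : v <+: W) (hsuf : v <:+ W)
    (ht : W.length ≤ 2 * v.length + 1)
    (hm : v.length ∈ Γ')
    (hmap : ∀ γ ∈ Γ, γ ∈ Γ' ∨ γ + (W.length - v.length) ∈ Γ')
    (hbdd : ∀ γ ∈ Γ', γ < W.length) :
    IsAttractor W Γ' := by
  refine ⟨hbdd, ?_⟩
  intro f hne hinf
  obtain ⟨i, hocc⟩ := Occ.infix_occ hinf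
  have hflen : 1 ≤ f.length := List.length_pos_iff.mpr hne
  have hilen := hocc.1
  have hvW : v.length ≤ W.length := hpre.length_le
  by_cases hcross : i ≤ v.length ∧ v.length < i + f.length
  · exact ⟨i, hocc, v.length, hm, by omega⟩
  · have hfv : ∃ j₀, occursAt f v j₀ := by
      by_cases h1 : i + f.length ≤ v.length
      · have h2 := Occ.occ_restrict_take hocc h1 hvW
        refine ⟨i, ?_⟩
        have h3 : v = W.take v.length := List.prefix_iff_eq_take.mp hpre
        rwa [← h3] at h2
      · have hit : W.length - v.length ≤ i := by omega
        have h2 := Occ.occ_restrict_drop hocc hit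
        have h3 : v = W.drop (W.length - v.length) := List.suffix_iff_eq_drop.mp hsuf
        refine ⟨i - (W.length - v.length), ?_⟩
        rwa [← h3] at h2
    obtain ⟨j₀, hj₀⟩ := hfv
    obtain ⟨j, hoccv, γ, hγ, hcov1, hcov2⟩ := hA.2 f hne (Occ.occ_infix hj₀)
    rcases hmap γ hγ with hin | hin
    · exact ⟨j, Occ.occ_prefix_ext hoccv hpre, γ, hin, hcov1, hcov2⟩
    · obtain ⟨u, hu⟩ := hsuf
      have hshift := Occ.occ_shift (u := u) hoccv
      have hul : u.length = W.length - v.length := by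
        have : W.length = u.length + v.length := by rw [← hu]; simp
        omega
      rw [hu] at hshift
      exact ⟨u.length + j, hshift, γ + (W.length - v.length), hin, by omega, by omega⟩

def Pk (w : ℕ → List Bool) (n : ℕ) : Prop :=
  ∃ g0 g1 : ℕ,
    IsAntipal (w n) ∧
    (∃ q, IsAntipal q ∧ q ++ [false] <+: w n ∧ q.length = g0) ∧
    (∀ q, IsAntipal q → q ++ [false] <+: w n → q.length ≤ g0) ∧
    (∀ q, IsAntipal q → q ++ [true] <+: w n → q.length ≤ g1) ∧
    ((∃ q, IsAntipal q ∧ q ++ [true] <+: w n ∧ q.length = g1) ∨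
      (w n = altW n ∧ g1 = g0 ∧ g0 + 2 = 2*n)) ∧
    IsAttractor (w n) {g0, g1, (w n).length - g1 - 1}

lemma no_true_wit (n : ℕ) : ¬ ∃ y, IsAntipal y ∧ y ++ [true] <+: altW n := by
  rintro ⟨y, hya, hyp⟩
  have hb := hyp.length_le
  simp at hb
  have hg := prefix_snoc_getElem hyp
  rw [altW_get n _ (by simp; omega)] at hg
  have := antipal_even hya
  simp at hg
  omega

lemma base_case (δ : ℕ → Bool) (hδ1 : δ 1 = false) (w : ℕ → List Bool) (h0 : w 0 = [])
    (hclos : ∀ k, IsAntipalClosure (w k ++ [δ (k + 1)]) (w (k + 1))) :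
    Pk w 1 := by
  have hc : IsAntipalClosure [false] (w 1) := by
    have h := hclos 0
    rw [h0, hδ1] at h
    simpa using h
  have hw1 : w 1 = altW 1 := by
    have hpre : [false] <+: w 1 := hc.2.1
    have hl1 : 1 ≤ (w 1).length := by simpa using hpre.length_le
    have heven := antipal_even hc.1
    have hl2 : (w 1).length ≤ 2 := by
      have := hc.2.2 [false, true] rfl ⟨[true], rfl⟩
      simpa using this
    have hlen : (w 1).length = 2 := by omega
    have hg0 : (w 1)[0]'(by omega) = false := by
      have : ([] : List Bool) ++ [false] <+: w 1 := by simpa using hpre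
      simpa using prefix_snoc_getElem this
    have hg1 : (w 1)[1]'(by omega) = true := by
      have := antipal_getElem hc.1 (i := 1) (j := 0) (by omega) (by omega) (by omega)
      rw [this, hg0]
      rfl
    apply List.ext_getElem (by simpa using hlen)
    intro k h1 h2
    rcases (by omega : k = 0 ∨ k = 1) with hk | hk
    · subst hk; rw [hg0]; rfl
    · subst hk; rw [hg1]; rfl
  refine ⟨0, 0, hc.1, ⟨[], antipal_nil, by simpa using hc.2.1, rfl⟩, ?_, ?_, ?_, ?_⟩
  · intro q hq hqp
    have := antipal_even hq
    have := hqp.length_le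
    rw [hw1] at this
    simp at this
    omega
  · intro q hq hqp
    have := antipal_even hq
    have := hqp.length_le
    rw [hw1] at this
    simp at this
    omega
  · right
    exact ⟨hw1, rfl, rfl⟩
  · rw [hw1]
    have h := attA 1 (by omega)
    have hfs : ({0, 0, (altW 1).length - 0 - 1} : Finset ℕ) = {2*1 - 2, 1} := by decide
    rwa [hfs]

lemma step_case (δ : ℕ → Bool) (w : ℕ → List Bool)
    (hclos : ∀ k, IsAntipalClosure (w k ++ [δ (k + 1)]) (w (k + 1)))
    (n : ℕ) (hn : 1 ≤ n) (ih : Pk w n) : Pk w (n + 1) := by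
  obtain ⟨g0, g1, hap, ⟨q0, hq0a, hq0p, hq0l⟩, hB0, hB1, hW1A, hAtt⟩ := ih
  have hc := hclos n
  have hg0m : g0 + 1 ≤ (w n).length := by
    have := hq0p.length_le; simp [hq0l] at this; omega
  have hg1m : g1 + 1 ≤ (w n).length := by
    rcases hW1A with ⟨q1, hq1a, hq1p, hq1l⟩ | ⟨hA1, hA2, hA3⟩
    · have := hq1p.length_le; simp [hq1l] at this; omega
    · have : (w n).length = 2 * n := by rw [hA1]; simp
      omega
  have hxpre : w n ++ [δ (n+1)] <+: w (n + 1) := hc.2.1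
  have hpre : w n <+: w (n + 1) := (List.prefix_append (w n) [δ (n+1)]).trans hxpre
  have hsuf : w n <:+ w (n + 1) := by
    have := antipal_prefix_suffix hc.1 hpre
    rwa [hap] at this
  have hanew := hc.1
  have hqbnd : ∀ (a : Bool) (q : List Bool), IsAntipal q → q ++ [a] <+: w (n + 1) →
      (q.length + 1 ≤ (w n).length ∧ q ++ [a] <+: w n) ∨ (q = w n ∧ a = δ (n+1)) := by
    intro a q hqa hqp
    have hqpre : q <+: w (n + 1) := (List.prefix_append q [a]).trans hqp
    have hlt : q.length < (w (n + 1)).length := by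
      have := hqp.length_le; simp at this; omega
    have hlm : q.length < (w n).length + 1 := by
      have := closure_no_middle hc hqa hqpre hlt
      simpa using this
    by_cases hqm : q.length = (w n).length
    · right
      have hqwn : q = w n := prefix_eq_of_len hqpre hpre hqm
      have heqp : q ++ [a] = w n ++ [δ (n+1)] :=
        prefix_eq_of_len hqp hxpre (by simp [hqm])
      rw [hqwn] at heqp
      have h2 := (List.append_inj' heqp rfl).2
      exact ⟨hqwn, by simpa using h2⟩
    · left
      refine ⟨by omega, List.prefix_of_prefix_length_le hqp hpre (by simp; omega)⟩
  cases hδv : δ (n + 1) with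
  | true =>
    rw [hδv] at hc hxpre hqbnd
    rcases hW1A with ⟨q1, hq1a, hq1p, hq1l⟩ | ⟨hA1, hA2, hA3⟩
    · -- non-degenerate, d = true
      have hlen' : (w (n+1)).length + g1 = 2 * (w n).length :=
        closure_len hap hc hq1a hq1p hq1l (fun y hy hyp => hB1 y hy hyp)
      refine ⟨g0, (w n).length, hanew, ⟨q0, hq0a, hq0p.trans hpre, hq0l⟩, ?_, ?_,
        Or.inl ⟨w n, hap, hxpre, rfl⟩, ?_⟩
      · intro q hq hqp
        rcases hqbnd false q hq hqp with ⟨h1, h2⟩ | ⟨h1, h2⟩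
        · exact hB0 q hq h2
        · simp at h2
      · intro q hq hqp
        rcases hqbnd true q hq hqp with ⟨h1, h2⟩ | ⟨h1, h2⟩
        · have := hB1 q hq h2; omega
        · simp [h1]
      · apply attractor_transfer hAtt hpre hsuf (by omega)
        · simp
        · intro γ hγ
          simp only [Finset.mem_insert, Finset.mem_singleton] at hγ ⊢
          omega
        · intro γ hγ
          simp only [Finset.mem_insert, Finset.mem_singleton] at hγ
          omega
    · -- degenerate, d = true, w n = altW n
      have hm2n : (w n).length = 2 * n := by rw [hA1]; simp
      have hno : ¬ ∃ y, IsAntipal y ∧ y ++ [true] <+: w n := by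
        rw [hA1]; exact no_true_wit n
      have hlen' : (w (n+1)).length = 2 * (w n).length + 2 :=
        closure_len_degen hap hc hno
      have hxpre2 := hxpre
      obtain ⟨r, hr⟩ := hxpre2
      have hrlen : r.length = (w n).length + 1 := by
        have : (w n ++ [true] ++ r).length = (w (n+1)).length := by rw [hr]
        simp at this
        omega
      have hreq : r = [false] ++ w n := by
        have hsufE : [false] ++ w n <:+ w (n + 1) := by
          have h5 := antipal_prefix_suffix hanew hc.2.1
          rwa [Emap_append, Emap_singleton, hap] at h5
        have h6 : [false] ++ w n = (w (n+1)).drop ((w (n+1)).length - ((w n).length + 1)) := by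
          have := List.suffix_iff_eq_drop.mp hsufE
          simpa using this
        have h7 : (w (n+1)).drop ((w n).length + 1) = r := by
          rw [← hr, show (w n).length + 1 = (w n ++ [true]).length by simp, List.drop_left]
        rw [h6, ← h7]
        congr 1
        omega
      have hwstruct : w (n+1) = altW n ++ [true, false] ++ altW n := by
        rw [← hr, hreq, hA1]
        simp
      refine ⟨g0, (w n).length, hanew, ⟨q0, hq0a, hq0p.trans hpre, hq0l⟩, ?_, ?_,
        Or.inl ⟨w n, hap, hxpre, rfl⟩, ?_⟩
      · intro q hq hqp
        rcases hqbnd false q hq hqp with ⟨h1, h2⟩ | ⟨h1, h2⟩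
        · exact hB0 q hq h2
        · simp at h2
      · intro q hq hqp
        rcases hqbnd true q hq hqp with ⟨h1, h2⟩ | ⟨h1, h2⟩
        · exact absurd ⟨q, hq, h2⟩ hno
        · simp [h1]
      · have efs : ({g0, (w n).length, (w (n+1)).length - (w n).length - 1} : Finset ℕ)
            = {2*n - 2, 2*n, 2*n + 1} := by
          rw [show (w (n+1)).length - (w n).length - 1 = 2*n + 1 from by omega, hm2n,
            show g0 = 2*n - 2 from by omega]
        rw [efs, hwstruct]
        exact attTrans n hn
  | false =>
    rw [hδv] at hc hxpre hqbnd
    have hlen' : (w (n+1)).length + g0 = 2 * (w n).length :=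
      closure_len hap hc hq0a hq0p hq0l (fun y hy hyp => hB0 y hy hyp)
    rcases hW1A with ⟨q1, hq1a, hq1p, hq1l⟩ | ⟨hA1, hA2, hA3⟩
    · -- non-degenerate, d = false
      refine ⟨(w n).length, g1, hanew, ⟨w n, hap, hxpre, rfl⟩, ?_, ?_,
        Or.inl ⟨q1, hq1a, hq1p.trans hpre, hq1l⟩, ?_⟩
      · intro q hq hqp
        rcases hqbnd false q hq hqp with ⟨h1, h2⟩ | ⟨h1, h2⟩
        · have := hB0 q hq h2; omega
        · simp [h1]
      · intro q hq hqp
        rcases hqbnd true q hq hqp with ⟨h1, h2⟩ | ⟨h1, h2⟩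
        · exact hB1 q hq h2
        · simp at h2
      · apply attractor_transfer hAtt hpre hsuf (by omega)
        · simp
        · intro γ hγ
          simp only [Finset.mem_insert, Finset.mem_singleton] at hγ ⊢
          omega
        · intro γ hγ
          simp only [Finset.mem_insert, Finset.mem_singleton] at hγ
          omega
    · -- degenerate regime continues: w (n+1) = altW (n+1)
      have hm2n : (w n).length = 2 * n := by rw [hA1]; simp
      have hN' : (w (n+1)).length = 2*n + 2 := by omega
      have hxpre2 := hxpre
      obtain ⟨r, hr⟩ := hxpre2
      have hrlen : r.length = 1 := by
        have : (w n ++ [false] ++ r).length = (w (n+1)).length := by rw [hr]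
        simp at this
        omega
      have hw0 : (w (n+1))[0]'(by omega) = false := by
        rw [← hpre.getElem (by omega : 0 < (w n).length)]
        rw [List.getElem_of_eq hA1 (by omega)]
        rw [altW_get n 0 (by simp; omega)]
        rfl
      have hlast : (w (n+1))[(w n).length + 1]'(by omega) = true := by
        rw [antipal_getElem hanew (by omega) (by omega : 0 < (w (n+1)).length) (by omega), hw0]
        rfl
      obtain ⟨x, hx⟩ : ∃ x, r = [x] := by
        cases r with
        | nil => simp at hrlen
        | cons a t =>
          cases t with
          | nil => exact ⟨a, rfl⟩
          | cons b u => simp at hrlen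
      have hxval : x = true := by
        have h8 : (w (n+1))[(w n).length + 1]'(by omega)
            = ((w n ++ [false]) ++ [x])[(w n).length + 1]'(by simp) := by
          apply List.getElem_of_eq
          rw [← hr, hx]
        rw [← hlast, h8, List.getElem_append_right (by simp)]
        simp
      have hwn1 : w (n+1) = altW (n+1) := by
        rw [← hr, hx, hxval, hA1]
        show altW n ++ [false] ++ [true] = altW (n+1)
        simp [altW]
      refine ⟨(w n).length, (w n).length, hanew, ⟨w n, hap, hxpre, rfl⟩, ?_, ?_,
        Or.inr ⟨hwn1, rfl, by omega⟩, ?_⟩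
      · intro q hq hqp
        rcases hqbnd false q hq hqp with ⟨h1, h2⟩ | ⟨h1, h2⟩
        · omega
        · simp [h1]
      · intro q hq hqp
        rcases hqbnd true q hq hqp with ⟨h1, h2⟩ | ⟨h1, h2⟩
        · omega
        · simp [h1]
      · have e2 : (w (n+1)).length - (w n).length - 1 = 1 := by omega
        rw [e2, Finset.insert_idem, hwn1, hm2n]
        have h := attA (n+1) (by omega)
        have e3 : 2*(n+1) - 2 = 2*n := by omega
        rwa [e3] at h

end SA

theorem stmt_14 (δ : ℕ → Bool) (hδ1 : δ 1 = false)
    (w : ℕ → List Bool) (h0 : w 0 = [])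
    (hclos : ∀ k, IsAntipalClosure (w k ++ [δ (k + 1)]) (w (k + 1)))
    (n : ℕ) (hn : 1 ≤ n)
    (v : List Bool) (hv : v = w n)
    (e : Bool → ℕ)
    (he : ∀ a : Bool,
      ((∃ q, IsAntipal q ∧ (q ++ [a]) <+: v ∧ q.length = e a) ∧
        (∀ q, IsAntipal q → (q ++ [a]) <+: v → q.length ≤ e a)) ∨
      ((¬ ∃ q, IsAntipal q ∧ (q ++ [a]) <+: v) ∧ e a = e (!a))) :
    IsAttractor v ({e false, e true, v.length - e true - 1} : Finset ℕ) := by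
  subst hv
  have hP : SA.Pk w n :=
    Nat.le_induction (SA.base_case δ hδ1 w h0 hclos)
      (fun k hk ih => SA.step_case δ w hclos k hk ih) n hn
  obtain ⟨g0, g1, hap, ⟨q0, hq0a, hq0p, hq0l⟩, hB0, hB1, hW1A, hAtt⟩ := hP
  have hef : e false = g0 := by
    rcases he false with ⟨⟨q, hq, hqp, hql⟩, hbnd⟩ | ⟨hnex, _⟩
    · have h1 := hB0 q hq hqp
      have h2 := hbnd q0 hq0a hq0p
      omega
    · exact absurd ⟨q0, hq0a, hq0p⟩ hnex
  have het : e true = g1 := by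
    rcases hW1A with ⟨q1, hq1a, hq1p, hq1l⟩ | ⟨hA1, hA2, hA3⟩
    · rcases he true with ⟨⟨q, hq, hqp, hql⟩, hbnd⟩ | ⟨hnex, _⟩
      · have h1 := hB1 q hq hqp
        have h2 := hbnd q1 hq1a hq1p
        omega
      · exact absurd ⟨q1, hq1a, hq1p⟩ hnex
    · rcases he true with ⟨⟨q, hq, hqp, hql⟩, hbnd⟩ | ⟨hnex, heq⟩
      · refine absurd ⟨q, hq, ?_⟩ (SA.no_true_wit n)
        rwa [hA1] at hqp
      · have : e true = e false := by simpa using heq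
        omega
  rw [hef, het]
  exact hAtt
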